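/- arXiv:2010.07579 — 2 statements merged into one kernel-verified Lean document; each statement's English description precedes it below -/
import Mathlib

section
/- Let τ ∈ ℋ₂. (1) If r(τ) ≥ 0.4, then the theta constants θ_j(τ) for 0 ≤ j ≤ 3 are in good position. (2) If λ₁(τ) ≥ 0.6, then the theta constants θ_j(τ) for 0 ≤ j ≤ 3 are in good position. -/
open Complex

noncomputable section

/-- 2×2 complex matrices. -/
abbrev Mat2 := Matrix (Fin 2) (Fin 2) ℂ

/-- Membership in the genus-2 Siegel half space: symmetric with
positive definite imaginary part. -/
def inH2 (τ : Mat2) : Prop :=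
  τ.IsSymm ∧ (τ.map Complex.im).PosDef

/-- Genus-2 theta constants with characteristics `a, b ∈ {0,1}²`. -/
def theta (a b : Fin 2 → ℤ) (τ : Mat2) : ℂ :=
  ∑' m : Fin 2 → ℤ,
    Complex.exp ((Real.pi : ℂ) * Complex.I *
      ((∑ i : Fin 2, ∑ j : Fin 2,
          ((m i : ℂ) + (a i : ℂ) / 2) * τ i j * ((m j : ℂ) + (a j : ℂ) / 2)) +
        ∑ i : Fin 2, ((m i : ℂ) + (a i : ℂ) / 2) * ((b i : ℂ) / 2)))

/-- Numbered theta constants: `θ_{(a₀,a₁),(b₀,b₁)} = θ_j` with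
`j = b₀ + 2 b₁ + 4 a₀ + 8 a₁`. -/
def thetaIdx (j : ℕ) (τ : Mat2) : ℂ :=
  theta ![((j / 4 % 2 : ℕ) : ℤ), ((j / 8 % 2 : ℕ) : ℤ)]
    ![((j % 2 : ℕ) : ℤ), ((j / 2 % 2 : ℕ) : ℤ)] τ

def z1 (τ : Mat2) : ℂ := τ 0 0
def z2 (τ : Mat2) : ℂ := τ 1 1
def z3 (τ : Mat2) : ℂ := τ 0 1
def x1 (τ : Mat2) : ℝ := (z1 τ).re
def x2 (τ : Mat2) : ℝ := (z2 τ).re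
def x3 (τ : Mat2) : ℝ := (z3 τ).re
def y1 (τ : Mat2) : ℝ := (z1 τ).im
def y2 (τ : Mat2) : ℝ := (z2 τ).im
def y3 (τ : Mat2) : ℝ := (z3 τ).im
def q1 (τ : Mat2) : ℝ := Real.exp (-Real.pi * y1 τ)
def q2 (τ : Mat2) : ℝ := Real.exp (-Real.pi * y2 τ)

/-- The domain 𝓕′ containing the fundamental domain 𝓕₂. -/
def inF' (τ : Mat2) : Prop :=
  inH2 τ ∧ |x1 τ| ≤ 1/2 ∧ |x2 τ| ≤ 1/2 ∧ |x3 τ| ≤ 1/2 ∧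
    2 * |y3 τ| ≤ y1 τ ∧ y1 τ ≤ y2 τ ∧ Real.sqrt 3 / 2 ≤ y1 τ ∧
    1 ≤ ‖z1 τ‖ ∧ 1 ≤ ‖z2 τ‖

/-- A set of complex numbers is in good position if it is contained in
an open quarter plane. -/
def GoodPosition (s : Set ℂ) : Prop :=
  ∃ u : ℂ, ‖u‖ = 1 ∧ ∀ z ∈ s, 0 < (u * z).re ∧ 0 < (u * z).im

/-- Action of a block matrix `[[A,B],[C,D]]` on the Siegel half space. -/
def actBlocks (A B C D τ : Mat2) : Mat2 := (A * τ + B) * (C * τ + D)⁻¹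

/-- The matrices S₁, S₂, S₃. -/
def Smat : ℕ → Mat2
  | 1 => !![1, 0; 0, 0]
  | 2 => !![0, 0; 0, 1]
  | 3 => !![0, 1; 1, 0]
  | _ => 0

/-- Action of γ_k on ℋ₂, for 0 ≤ k ≤ 3: γ₀ = I₄ and
γ_k = [[−I₂, −S_k],[S_k, −I₂+S_k²]] for k = 1,2,3. -/
def gammaAction (k : ℕ) (τ : Mat2) : Mat2 :=
  if k = 0 then τ
  else actBlocks (-1) (-(Smat k)) (Smat k) (-1 + Smat k ^ 2) τ

/-- τ₁⁽ⁿ⁾ = [[2⁻ⁿz₁, z₃],[z₃, 2ⁿz₂]]. -/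
def tau1n (n : ℕ) (τ : Mat2) : Mat2 :=
  !![((2:ℂ)^n)⁻¹ * z1 τ, z3 τ; z3 τ, (2:ℂ)^n * z2 τ]

/-- τ₂⁽ⁿ⁾ = [[2ⁿz₁, z₃],[z₃, 2⁻ⁿz₂]]. -/
def tau2n (n : ℕ) (τ : Mat2) : Mat2 :=
  !![(2:ℂ)^n * z1 τ, z3 τ; z3 τ, ((2:ℂ)^n)⁻¹ * z2 τ]

/-- τ₄⁽ⁿ⁾ = [[−2ⁿ/z₁, −z₃/z₁],[−z₃/z₁, 2⁻ⁿ(z₂ − z₃²/z₁)]]. -/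
def tau4n (n : ℕ) (τ : Mat2) : Mat2 :=
  !![-(2:ℂ)^n / z1 τ, -z3 τ / z1 τ;
     -z3 τ / z1 τ, ((2:ℂ)^n)⁻¹ * (z2 τ - z3 τ ^ 2 / z1 τ)]

/-- Smallest eigenvalue of Im τ, for a symmetric 2×2 matrix τ. -/
def lambda1 (τ : Mat2) : ℝ :=
  (y1 τ + y2 τ - Real.sqrt ((y1 τ - y2 τ) ^ 2 + 4 * y3 τ ^ 2)) / 2

/-- r(τ) = min{λ₁(τ), y₁(τ)/2, y₂(τ)/2}. -/
def rmin (τ : Mat2) : ℝ := min (lambda1 τ) (min (y1 τ / 2) (y2 τ / 2))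

def xi46 (τ : Mat2) : ℂ := 2 * Complex.exp ((Real.pi : ℂ) * Complex.I * z1 τ / 4)

def xi89 (τ : Mat2) : ℂ := 2 * Complex.exp ((Real.pi : ℂ) * Complex.I * z2 τ / 4)

def xi0 (τ : Mat2) : ℂ :=
  1 + 2 * Complex.exp ((Real.pi : ℂ) * Complex.I * z1 τ) +
    2 * Complex.exp ((Real.pi : ℂ) * Complex.I * z2 τ)

def xi02 (τ : Mat2) : ℂ := 1 + 2 * Complex.exp ((Real.pi : ℂ) * Complex.I * z1 τ)

def xi01 (τ : Mat2) : ℂ := 1 + 2 * Complex.exp ((Real.pi : ℂ) * Complex.I * z2 τ)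

def xi12 (τ : Mat2) : ℂ :=
  Complex.exp ((Real.pi : ℂ) * Complex.I * (z1 τ + z2 τ) / 4) *
    (Complex.exp ((Real.pi : ℂ) * Complex.I * z3 τ / 2) +
      Complex.exp (-((Real.pi : ℂ) * Complex.I * z3 τ / 2)))

/-- ρ_{4,6}^{(k)}(q₁,q₂); here `s` plays the role of q₁ and `t` of q₂. -/
def rho46 (k s t : ℝ) : ℝ :=
  s ^ (2:ℝ) / (1 - s ^ (4:ℝ)) + t ^ (1 - 1/k) / (1 - t ^ (3 - 1/k)) +
    t ^ (1 + 1/k) / (1 - t ^ (3 + 1/k)) +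
    s ^ ((7:ℝ)/8) * t ^ ((1:ℝ)/2) / ((1 - t ^ ((3:ℝ)/2)) * (1 - s ^ (2:ℝ))) +
    s ^ ((25:ℝ)/8) * t ^ ((3:ℝ)/2) / ((1 - t ^ ((9:ℝ)/2)) * (1 - s ^ (6:ℝ)))

/-- ρ_{8,9}^{(k)}(q₁,q₂); here `s` plays the role of q₁ and `t` of q₂. -/
def rho89 (k s t : ℝ) : ℝ :=
  t ^ (2:ℝ) / (1 - t ^ (4:ℝ)) + s ^ (1 - 1/k) / (1 - s ^ (3 - 1/k)) +
    s ^ (1 + 1/k) / (1 - s ^ (3 + 1/k)) +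
    t ^ ((7:ℝ)/8) * s ^ ((1:ℝ)/2) / ((1 - s ^ ((3:ℝ)/2)) * (1 - t ^ (2:ℝ))) +
    t ^ ((25:ℝ)/8) * s ^ ((3:ℝ)/2) / ((1 - s ^ ((9:ℝ)/2)) * (1 - t ^ (6:ℝ)))

/-- ρ₀(q₁,q₂). -/
def rho0 (s t : ℝ) : ℝ :=
  2 * s ^ (4:ℝ) / (1 - s ^ (5:ℝ)) + 2 * t ^ (4:ℝ) / (1 - t ^ (5:ℝ)) +
    2 * s ^ ((1:ℝ)/2) * t ^ ((1:ℝ)/2) / ((1 - s ^ ((3:ℝ)/2)) * (1 - t ^ ((3:ℝ)/2))) +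
    2 * s ^ ((3:ℝ)/2) * t ^ ((3:ℝ)/2) / ((1 - s ^ ((9:ℝ)/2)) * (1 - t ^ ((9:ℝ)/2)))

/-- ρ₁₂(q₁,q₂). -/
def rho12 (s t : ℝ) : ℝ :=
  s ^ ((3:ℝ)/2) / (1 - s ^ ((7:ℝ)/2)) + s ^ ((5:ℝ)/2) / (1 - s ^ ((9:ℝ)/2)) +
    t ^ ((3:ℝ)/2) / (1 - t ^ ((7:ℝ)/2)) + t ^ ((5:ℝ)/2) / (1 - t ^ ((9:ℝ)/2)) +
    s ^ ((7:ℝ)/8) * t ^ ((7:ℝ)/8) / ((1 - s ^ (2:ℝ)) * (1 - t ^ (2:ℝ))) +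
    s ^ ((25:ℝ)/8) * t ^ ((25:ℝ)/8) / ((1 - s ^ (6:ℝ)) * (1 - t ^ (6:ℝ)))

/-- α = √(3/7). -/
def alph : ℝ := Real.sqrt (3/7)

/-- ρ'_{0,1}^{(k)}(q₁,q₂); here `s` plays the role of q₁ and `t` of q₂. -/
def rho01' (k s t : ℝ) : ℝ :=
  2 * t ^ (4:ℝ) / (1 - t ^ (5:ℝ)) + 2 * s / (1 - s ^ (3:ℝ)) +
    2 * s ^ (1 - 2/k) * t / (1 - s ^ (3 - 2/k)) +
    2 * s ^ (1 + 2/k) * t / (1 - s ^ (3 + 2/k)) +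
    2 * s ^ (1 - alph) * t ^ (4 * (1 - alph)) /
      ((1 - s ^ (3 * (1 - alph))) * (1 - t ^ (5 * (1 - alph)))) +
    2 * s ^ (1 + alph) * t ^ (4 * (1 + alph)) /
      ((1 - s ^ (3 * (1 + alph))) * (1 - t ^ (5 * (1 + alph))))

/-- ρ'_{8,9}^{(k)}(q₁,q₂); here `s` plays the role of q₁ and `t` of q₂. -/
def rho89' (k s t : ℝ) : ℝ :=
  t ^ (2:ℝ) / (1 - t ^ (4:ℝ)) + s ^ (1 - 1/k) / (1 - s ^ (3 - 1/k)) +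
    s ^ (1 + 1/k) / (1 - s ^ (3 + 1/k)) +
    t ^ (2 - (9/4) * alph) * s ^ (1 - alph) /
      ((1 - t ^ (4 * (1 - alph))) * (1 - s ^ (3 * (1 - alph)))) +
    t ^ (2 + (9/4) * alph) * s ^ (1 + alph) /
      ((1 - t ^ (4 * (1 + alph))) * (1 - s ^ (3 * (1 + alph))))

namespace Stmt12Aux

open Real

/-! ### Numeric bounds on exponentials -/

lemma exp_pi5 : (1.874:ℝ) ≤ Real.exp (Real.pi/5) := by
  have h1 : (0.6283184:ℝ) ≤ Real.pi/5 := by have := Real.pi_gt_d6; linarith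
  refine le_trans ?_ (Real.exp_le_exp.mpr h1)
  have hb := Real.exp_bound (x := (0.6283184:ℝ)) (by rw [_root_.abs_of_nonneg] <;> norm_num)
    (n := 6) (by norm_num)
  have h2 := (abs_sub_le_iff.mp hb).2
  rw [_root_.abs_of_nonneg (by norm_num : (0:ℝ) ≤ 0.6283184)] at h2
  norm_num [Finset.sum_range_succ, Nat.factorial] at h2 ⊢
  linarith

lemma exp_neg_k5 (k : ℕ) : Real.exp (-(Real.pi * (k/5))) ≤ ((1.874:ℝ)^k)⁻¹ := by
  have h0 : Real.pi * (k/5) = (k:ℕ) * (Real.pi/5) := by push_cast; ring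
  rw [Real.exp_neg, h0, Real.exp_nat_mul]
  exact inv_anti₀ (by positivity)
    (pow_le_pow_left₀ (by norm_num) exp_pi5 k)

lemma exp_neg25 : Real.exp (-(Real.pi * (2/5))) ≤ 0.28475 := by
  have h := exp_neg_k5 2
  norm_num at h ⊢
  linarith

lemma exp_neg35 : Real.exp (-(Real.pi * (3/5))) ≤ 0.15195 := by
  have h := exp_neg_k5 3
  norm_num at h ⊢
  linarith

lemma exp_neg45 : Real.exp (-(Real.pi * (4/5))) ≤ 0.08109 := by
  have h := exp_neg_k5 4
  norm_num at h ⊢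
  linarith

/-! ### monotone ratio -/

lemma ratio_mono {x y : ℝ} (hx : 0 ≤ x) (hxy : x ≤ y) (hy : y < 1) :
    x / (1 - x^3) ≤ y / (1 - y^3) := by
  have h1 : x^3 ≤ y^3 := pow_le_pow_left₀ hx hxy 3
  have h2 : y^3 < 1 := by
    calc y^3 ≤ y^1 := pow_le_pow_of_le_one (hx.trans hxy) hy.le (by norm_num)
    _ < 1 := by simpa using hy
  exact div_le_div₀ (hx.trans hxy) hxy (by linarith) (by linarith)

end Stmt12Aux
namespace Stmt12Aux
open Real

lemma lambda1_le_min (τ : Mat2) : lambda1 τ ≤ min (y1 τ) (y2 τ) := by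
  have h1 : |y1 τ - y2 τ| ≤ Real.sqrt ((y1 τ - y2 τ) ^ 2 + 4 * y3 τ ^ 2) := by
    rw [← Real.sqrt_sq_eq_abs]
    exact Real.sqrt_le_sqrt (by nlinarith [sq_nonneg (y3 τ)])
  unfold lambda1
  simp only [le_min_iff]
  cases' abs_cases (y1 τ - y2 τ) with h h <;>
    constructor <;> nlinarith [h1, h.1, h.2]

lemma quadform (τ : Mat2) {b : ℝ} (hb0 : 0 ≤ b) (hl : b ≤ lambda1 τ) (p q : ℝ) :
    b * (p^2 + q^2) ≤ y1 τ * p^2 + 2 * y3 τ * p * q + y2 τ * q^2 := by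
  set s := Real.sqrt ((y1 τ - y2 τ) ^ 2 + 4 * y3 τ ^ 2) with hs
  have hs0 : 0 ≤ s := Real.sqrt_nonneg _
  have hs2 : s^2 = (y1 τ - y2 τ) ^ 2 + 4 * y3 τ ^ 2 :=
    Real.sq_sqrt (by positivity)
  have hmin := lambda1_le_min τ
  have hb1 : b ≤ y1 τ := le_trans hl (le_trans hmin (min_le_left _ _))
  have hb2 : b ≤ y2 τ := le_trans hl (le_trans hmin (min_le_right _ _))
  have hsle : s ≤ y1 τ + y2 τ - 2*b := by unfold lambda1 at hl; linarith
  have hdet : y3 τ ^2 ≤ (y1 τ - b) * (y2 τ - b) := by nlinarith [sq_nonneg s]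
  set A := y1 τ - b with hA'
  set B := y2 τ - b with hB'
  have hA : 0 ≤ A := by rw [hA']; linarith
  have hB : 0 ≤ B := by rw [hB']; linarith
  have key : 0 ≤ A * p^2 + 2 * y3 τ * p * q + B * q^2 := by
    rcases eq_or_lt_of_le (add_nonneg hA hB) with h0 | h0
    · have hA0 : A = 0 := by linarith
      have hB0 : B = 0 := by linarith
      have hy3 : y3 τ = 0 := by
        have := hdet
        rw [hA', hB'] at this
        nlinarith [sq_nonneg (y3 τ)]
      simp [hA0, hB0, hy3]
    · nlinarith [sq_nonneg (A*p + y3 τ*q), sq_nonneg (y3 τ*p + B*q),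
        mul_nonneg (mul_nonneg hA hB) (sq_nonneg (p-q)), sq_nonneg p, sq_nonneg q]
  nlinarith [key]

end Stmt12Aux
namespace Stmt12Aux
open Real

/-- the 1-D majorant: `x^(3|n|-2)` for `n ≠ 0`, `0` at `n = 0`. -/
def F (x : ℝ) (n : ℤ) : ℝ := if n = 0 then 0 else x * (x^3)^(n.natAbs - 1)

/-- ℕ-version. -/
def G (x : ℝ) (k : ℕ) : ℝ := if k = 0 then 0 else x * (x^3)^(k - 1)

lemma G_summable {x : ℝ} (h0 : 0 ≤ x) (h1 : x < 1) : Summable (G x) := by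
  apply (summable_nat_add_iff 1).mp
  have : (fun n : ℕ => G x (n + 1)) = fun n : ℕ => x * (x^3)^n := by
    funext n; simp [G]
  rw [this]
  exact (summable_geometric_of_lt_one (by positivity) (pow_lt_one₀ h0 h1 (by norm_num))).mul_left x

lemma G_tsum {x : ℝ} (h0 : 0 ≤ x) (h1 : x < 1) : ∑' k, G x k = x / (1 - x^3) := by
  rw [Summable.tsum_eq_zero_add (G_summable h0 h1)]
  have : (fun n : ℕ => G x (n + 1)) = fun n : ℕ => x * (x^3)^n := by
    funext n; simp [G]
  rw [this]
  simp [G, tsum_mul_left, tsum_geometric_of_lt_one (by positivity : (0:ℝ) ≤ x^3)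
    (pow_lt_one₀ h0 h1 (by norm_num)), div_eq_mul_inv]

lemma G_shift_tsum {x : ℝ} (h0 : 0 ≤ x) (h1 : x < 1) :
    ∑' k : ℕ, G x (k + 1) = x / (1 - x^3) := by
  have h := G_tsum h0 h1
  rw [Summable.tsum_eq_zero_add (G_summable h0 h1)] at h
  simpa [G] using h

lemma F_eq_G (x : ℝ) (n : ℤ) : F x n = G x n.natAbs := by
  simp only [F, G, Int.natAbs_eq_zero]

lemma F_nonneg {x : ℝ} (h0 : 0 ≤ x) (n : ℤ) : 0 ≤ F x n := by
  rw [F_eq_G]; unfold G; split <;> positivity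

lemma F_summable {x : ℝ} (h0 : 0 ≤ x) (h1 : x < 1) : Summable (F x) := by
  apply Summable.of_nat_of_neg_add_one
  · exact (G_summable h0 h1).congr (by intro n; rw [F_eq_G]; simp)
  · exact ((summable_nat_add_iff 1).mpr (G_summable h0 h1)).congr
      (by intro n; rw [F_eq_G]; congr 1 <;> omega)

lemma F_tsum {x : ℝ} (h0 : 0 ≤ x) (h1 : x < 1) :
    ∑' n : ℤ, F x n = 2 * (x / (1 - x^3)) := by
  rw [tsum_of_nat_of_neg_add_one
    ((G_summable h0 h1).congr (by intro n; rw [F_eq_G]; simp))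
    (((summable_nat_add_iff 1).mpr (G_summable h0 h1)).congr
      (by intro n; rw [F_eq_G]; congr 1 <;> omega))]
  have e1 : ∑' n : ℕ, F x n = x / (1 - x^3) := by
    rw [tsum_congr (fun n => by rw [F_eq_G]; simp : ∀ n : ℕ, F x n = G x n)]
    exact G_tsum h0 h1
  have e2 : ∑' n : ℕ, F x (-((n:ℤ)+1)) = x / (1 - x^3) := by
    rw [tsum_congr (fun n => by rw [F_eq_G]; congr 1 <;> omega :
      ∀ n : ℕ, F x (-((n:ℤ)+1)) = G x (n+1))]
    exact G_shift_tsum h0 h1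
  rw [e1, e2]; ring

/-- the delta function at `0`. -/
def V (n : ℤ) : ℝ := if n = 0 then 1 else 0

lemma V_hasSum : HasSum V 1 := hasSum_ite_eq (0 : ℤ) (1:ℝ)

lemma V_nonneg (n : ℤ) : 0 ≤ V n := by unfold V; split <;> norm_num

end Stmt12Aux
namespace Stmt12Aux
open Real

lemma norm_term (τ : Mat2) (hsym : τ.IsSymm) (b : Fin 2 → ℤ) (m : Fin 2 → ℤ) :
    ‖Complex.exp ((Real.pi:ℂ) * Complex.I *
      ((∑ i : Fin 2, ∑ j : Fin 2, ((m i:ℂ))*τ i j*((m j:ℂ))) +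
        ∑ i : Fin 2, (m i:ℂ) * ((b i:ℂ)/2)))‖
    = Real.exp (-Real.pi * (y1 τ * ((m 0:ℤ):ℝ)^2 + 2*y3 τ*((m 0:ℤ):ℝ)*((m 1:ℤ):ℝ)
        + y2 τ*((m 1:ℤ):ℝ)^2)) := by
  rw [Complex.norm_exp]
  congr 1
  have h10 : τ 1 0 = τ 0 1 := by
    have := congrFun (congrFun hsym 1) 0
    simpa [Matrix.transpose_apply] using this.symm
  simp [Fin.sum_univ_two, Complex.add_re, Complex.mul_re, Complex.mul_im, Complex.add_im, h10,
    y1, y2, y3, z1, z2, z3]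
  ring

lemma pow_sq_le {x : ℝ} (h0 : 0 ≤ x) (h1 : x ≤ 1) {k : ℕ} (hk : 1 ≤ k) :
    x ^ (k^2) ≤ x * (x^3)^(k-1) := by
  have h3 : x * (x^3)^(k-1) = x^(3*(k-1)+1) := by
    rw [← pow_mul, pow_succ, mul_comm]
  rw [h3]
  apply pow_le_pow_of_le_one h0 h1
  obtain ⟨j, rfl⟩ := Nat.exists_eq_add_of_le hk
  have hj : j ≤ j^2 := Nat.le_self_pow two_ne_zero j
  have he : (1+j)^2 = j^2 + 2*j + 1 := by ring
  have : 1 + j - 1 = j := by omega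
  rw [this, he]
  omega

lemma tsum_prod_mul {g h : ℤ → ℝ} (hg : Summable g) (hh : Summable h)
    (hg' : ∀ n, 0 ≤ g n) (hh' : ∀ n, 0 ≤ h n) :
    ∑' p : ℤ × ℤ, g p.1 * h p.2 = (∑' n, g n) * (∑' n, h n) := by
  rw [Summable.tsum_prod (hg.mul_of_nonneg hh (fun n => hg' n) (fun n => hh' n))]
  simp_rw [tsum_mul_left]
  rw [tsum_mul_right]

lemma summable_pi_mul {g h : ℤ → ℝ} (hg : Summable g) (hh : Summable h)
    (hg' : ∀ n, 0 ≤ g n) (hh' : ∀ n, 0 ≤ h n) :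
    Summable (fun m : Fin 2 → ℤ => g (m 0) * h (m 1)) :=
  (Equiv.summable_iff (finTwoArrowEquiv ℤ)).mpr
    (hg.mul_of_nonneg hh (fun n => hg' n) (fun n => hh' n))

lemma tsum_pi_mul {g h : ℤ → ℝ} (hg : Summable g) (hh : Summable h)
    (hg' : ∀ n, 0 ≤ g n) (hh' : ∀ n, 0 ≤ h n) :
    ∑' m : Fin 2 → ℤ, g (m 0) * h (m 1) = (∑' n, g n) * (∑' n, h n) := by
  rw [← tsum_prod_mul hg hh hg' hh']
  exact Equiv.tsum_eq (finTwoArrowEquiv ℤ) (fun p => g p.1 * h p.2)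

end Stmt12Aux
namespace Stmt12Aux
open Real

set_option maxHeartbeats 2000000 in
lemma theta_bound (τ : Mat2) (hτ : inH2 τ) {al be : ℝ}
    (hbe0 : 0 < be) (hba : be ≤ al) (hy1 : al ≤ y1 τ) (hy2 : al ≤ y2 τ)
    (hl : be ≤ lambda1 τ) (b : Fin 2 → ℤ) :
    ‖theta ![0,0] b τ - 1‖ ≤
      4 * (Real.exp (-(Real.pi * al)) / (1 - Real.exp (-(Real.pi * al))^3)) +
      4 * (Real.exp (-(Real.pi * be)) / (1 - Real.exp (-(Real.pi * be))^3))^2 := by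
  classical
  have hpi := Real.pi_pos
  set aa := Real.exp (-(Real.pi * al)) with haa
  set bb := Real.exp (-(Real.pi * be)) with hbb
  have hal0 : 0 < al := lt_of_lt_of_le hbe0 hba
  have haa0 : 0 < aa := Real.exp_pos _
  have hbb0 : 0 < bb := Real.exp_pos _
  have haa1 : aa < 1 := Real.exp_lt_one_iff.mpr (by nlinarith)
  have hbb1 : bb < 1 := Real.exp_lt_one_iff.mpr (by nlinarith)
  -- the summand and its norm
  set Q : (Fin 2 → ℤ) → ℝ := fun m =>
    y1 τ * ((m 0:ℤ):ℝ)^2 + 2*y3 τ*((m 0:ℤ):ℝ)*((m 1:ℤ):ℝ) + y2 τ*((m 1:ℤ):ℝ)^2 with hQ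
  set f : (Fin 2 → ℤ) → ℂ := fun m => Complex.exp ((Real.pi:ℂ) * Complex.I *
      ((∑ i : Fin 2, ∑ j : Fin 2, ((m i:ℂ))*τ i j*((m j:ℂ))) +
        ∑ i : Fin 2, (m i:ℂ) * ((b i:ℂ)/2))) with hf
  have hnorm : ∀ m, ‖f m‖ = Real.exp (-Real.pi * Q m) := fun m => norm_term τ hτ.1 b m
  have htheta : theta ![0,0] b τ = ∑' m, f m := by
    unfold theta
    apply tsum_congr; intro m
    have h0 : ∀ i : Fin 2, ((![(0:ℤ),0]) i : ℂ) = 0 := by intro i; fin_cases i <;> simp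
    simp only [h0, zero_div, add_zero]
    rfl
  -- quadratic form bounds
  have hQbe : ∀ m : Fin 2 → ℤ, be * (((m 0:ℤ):ℝ)^2 + ((m 1:ℤ):ℝ)^2) ≤ Q m := by
    intro m
    have := quadform τ hbe0.le hl ((m 0:ℤ):ℝ) ((m 1:ℤ):ℝ)
    simpa [hQ] using this
  -- exp-to-pow
  have hexp_pow : ∀ (c : ℝ), ∀ n : ℤ, Real.exp (-(Real.pi * c) * ((n:ℤ):ℝ)^2)
      = Real.exp (-(Real.pi*c)) ^ (n.natAbs^2) := by
    intro c n
    rw [← Real.exp_nat_mul]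
    congr 1
    have h2 : (((n:ℤ):ℝ))^2 = ((n.natAbs:ℝ))^2 := by
      rw [Nat.cast_natAbs]; simp [_root_.sq_abs]
    rw [h2]
    push_cast
    ring
  -- summability of ‖f‖
  have hgeo : Summable (fun n : ℤ => bb ^ n.natAbs) := by
    apply Summable.of_nat_of_neg_add_one
    · exact (summable_geometric_of_lt_one hbb0.le hbb1).congr (by intro n; simp)
    · apply ((summable_geometric_of_lt_one hbb0.le hbb1).mul_left bb).congr
      intro n
      rw [show ((-((n:ℤ) + 1)).natAbs) = n + 1 from by omega, pow_succ, mul_comm]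
  have hfn_le : ∀ m : Fin 2 → ℤ, ‖f m‖ ≤ bb ^ (m 0).natAbs * bb ^ (m 1).natAbs := by
    intro m
    rw [hnorm m]
    calc Real.exp (-Real.pi * Q m)
        ≤ Real.exp (-(Real.pi * be) * ((m 0:ℤ):ℝ)^2 + -(Real.pi * be) * ((m 1:ℤ):ℝ)^2) := by
          apply Real.exp_le_exp.mpr
          have := hQbe m
          nlinarith
      _ = bb ^ ((m 0).natAbs^2) * bb ^ ((m 1).natAbs^2) := by
          rw [Real.exp_add, hexp_pow be (m 0), hexp_pow be (m 1)]
      _ ≤ bb ^ (m 0).natAbs * bb ^ (m 1).natAbs := by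
          apply mul_le_mul
          · exact pow_le_pow_of_le_one hbb0.le hbb1.le (Nat.le_self_pow two_ne_zero _)
          · exact pow_le_pow_of_le_one hbb0.le hbb1.le (Nat.le_self_pow two_ne_zero _)
          · positivity
          · positivity
  have hsum_norm : Summable (fun m => ‖f m‖) :=
    Summable.of_nonneg_of_le (fun m => norm_nonneg _) hfn_le
      (summable_pi_mul hgeo hgeo (fun n => by positivity) (fun n => by positivity))
  have hsum : Summable f := Summable.of_norm hsum_norm
  -- the tail
  have hf0 : f 0 = 1 := by
    rw [hf]
    simp
  -- pointwise majorant
  have hpoint : ∀ m : Fin 2 → ℤ, (if m = 0 then (0:ℝ) else ‖f m‖) ≤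
      F aa (m 0) * V (m 1) + V (m 0) * F aa (m 1) + F bb (m 0) * F bb (m 1) := by
    intro m
    by_cases h0 : m 0 = 0 <;> by_cases h1 : m 1 = 0
    · have hm : m = 0 := by
        funext i; fin_cases i
        · exact h0
        · exact h1
      simp [hm, F, V]
    · have hm : m ≠ 0 := fun h => h1 (by rw [h]; rfl)
      rw [if_neg hm, hnorm m]
      have hk : 1 ≤ (m 1).natAbs := by omega
      have hRHS : F aa (m 0) * V (m 1) + V (m 0) * F aa (m 1) + F bb (m 0) * F bb (m 1)
          = F aa (m 1) := by simp [F, V, h0, h1]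
      rw [hRHS]
      calc Real.exp (-Real.pi * Q m) ≤ Real.exp (-(Real.pi * al) * ((m 1:ℤ):ℝ)^2) := by
            apply Real.exp_le_exp.mpr
            have hq : al * ((m 1:ℤ):ℝ)^2 ≤ Q m := by
              simp only [hQ, h0]
              push_cast
              nlinarith [sq_nonneg ((m 1:ℤ):ℝ)]
            nlinarith
        _ = aa ^ ((m 1).natAbs^2) := hexp_pow al (m 1)
        _ ≤ aa * (aa^3)^((m 1).natAbs - 1) := pow_sq_le haa0.le haa1.le hk
        _ = F aa (m 1) := by rw [F, if_neg h1]
    · have hm : m ≠ 0 := fun h => h0 (by rw [h]; rfl)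
      rw [if_neg hm, hnorm m]
      have hk : 1 ≤ (m 0).natAbs := by omega
      have hRHS : F aa (m 0) * V (m 1) + V (m 0) * F aa (m 1) + F bb (m 0) * F bb (m 1)
          = F aa (m 0) := by simp [F, V, h0, h1]
      rw [hRHS]
      calc Real.exp (-Real.pi * Q m) ≤ Real.exp (-(Real.pi * al) * ((m 0:ℤ):ℝ)^2) := by
            apply Real.exp_le_exp.mpr
            have hq : al * ((m 0:ℤ):ℝ)^2 ≤ Q m := by
              simp only [hQ, h1]
              push_cast
              nlinarith [sq_nonneg ((m 0:ℤ):ℝ)]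
            nlinarith
        _ = aa ^ ((m 0).natAbs^2) := hexp_pow al (m 0)
        _ ≤ aa * (aa^3)^((m 0).natAbs - 1) := pow_sq_le haa0.le haa1.le hk
        _ = F aa (m 0) := by rw [F, if_neg h0]
    · have hm : m ≠ 0 := fun h => h0 (by rw [h]; rfl)
      rw [if_neg hm, hnorm m]
      have hk : 1 ≤ (m 0).natAbs := by omega
      have hk' : 1 ≤ (m 1).natAbs := by omega
      have h1' : 0 ≤ F aa (m 0) * V (m 1) + V (m 0) * F aa (m 1) := by
        have := F_nonneg haa0.le (m 0)
        have := F_nonneg haa0.le (m 1)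
        have := V_nonneg (m 0)
        have := V_nonneg (m 1)
        positivity
      have : Real.exp (-Real.pi * Q m) ≤ F bb (m 0) * F bb (m 1) := by
        calc Real.exp (-Real.pi * Q m)
            ≤ Real.exp (-(Real.pi * be) * ((m 0:ℤ):ℝ)^2 + -(Real.pi * be) * ((m 1:ℤ):ℝ)^2) := by
              apply Real.exp_le_exp.mpr
              have := hQbe m
              nlinarith
          _ = bb ^ ((m 0).natAbs^2) * bb ^ ((m 1).natAbs^2) := by
              rw [Real.exp_add, hexp_pow be (m 0), hexp_pow be (m 1)]
          _ ≤ (bb * (bb^3)^((m 0).natAbs - 1)) * (bb * (bb^3)^((m 1).natAbs - 1)) := by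
              apply mul_le_mul (pow_sq_le hbb0.le hbb1.le hk) (pow_sq_le hbb0.le hbb1.le hk')
                (by positivity) (by positivity)
          _ = F bb (m 0) * F bb (m 1) := by rw [F, F, if_neg h0, if_neg h1]
      linarith
  -- summabilities of the majorant pieces
  have hFa := F_summable haa0.le haa1
  have hFb := F_summable hbb0.le hbb1
  have hVs := V_hasSum.summable
  have hFa' := F_nonneg haa0.le
  have hFb' := F_nonneg hbb0.le
  have huv := summable_pi_mul hFa hVs hFa' V_nonneg
  have hvu := summable_pi_mul hVs hFa V_nonneg hFa'
  have hww := summable_pi_mul hFb hFb hFb' hFb'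
  have hM : Summable (fun m : Fin 2 → ℤ =>
      F aa (m 0) * V (m 1) + V (m 0) * F aa (m 1) + F bb (m 0) * F bb (m 1)) :=
    (huv.add hvu).add hww
  have hite : Summable (fun m : Fin 2 → ℤ => if m = 0 then (0:ℝ) else ‖f m‖) := by
    apply Summable.of_nonneg_of_le (fun m => ?_) (fun m => ?_) hsum_norm
    · split
      · exact le_rfl
      · exact norm_nonneg _
    · split
      · exact norm_nonneg _
      · exact le_rfl
  -- main estimate
  have hmain : ‖theta ![0,0] b τ - 1‖ ≤
      ∑' m : Fin 2 → ℤ, (F aa (m 0) * V (m 1) + V (m 0) * F aa (m 1) + F bb (m 0) * F bb (m 1)) := by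
    rw [htheta, Summable.tsum_eq_add_tsum_ite hsum 0, hf0]
    rw [add_sub_cancel_left]
    calc ‖∑' m : Fin 2 → ℤ, (if m = 0 then (0:ℂ) else f m)‖
        ≤ ∑' m : Fin 2 → ℤ, ‖if m = 0 then (0:ℂ) else f m‖ := norm_tsum_le_tsum_norm
          (by
            apply Summable.of_nonneg_of_le (fun m => norm_nonneg _) _ hsum_norm
            intro m; split <;> simp [norm_nonneg])
      _ ≤ _ := by
          apply Summable.tsum_le_tsum _ _ hM
          · intro m
            have : ‖if m = 0 then (0:ℂ) else f m‖ = if m = 0 then (0:ℝ) else ‖f m‖ := by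
              split <;> simp
            rw [this]
            exact hpoint m
          · apply Summable.of_nonneg_of_le (fun m => norm_nonneg _) _ hsum_norm
            intro m; split <;> simp [norm_nonneg]
  -- evaluate the majorant sum
  have hVt : ∑' n, V n = 1 := V_hasSum.tsum_eq
  have hUa : ∑' n, F aa n = 2 * (aa / (1 - aa^3)) := F_tsum haa0.le haa1
  have hUb : ∑' n, F bb n = 2 * (bb / (1 - bb^3)) := F_tsum hbb0.le hbb1
  have hsplit : ∑' m : Fin 2 → ℤ,
      (F aa (m 0) * V (m 1) + V (m 0) * F aa (m 1) + F bb (m 0) * F bb (m 1))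
      = 4 * (aa / (1 - aa^3)) + 4 * (bb / (1 - bb^3))^2 := by
    rw [Summable.tsum_add (huv.add hvu) hww, Summable.tsum_add huv hvu]
    rw [tsum_pi_mul hFa hVs hFa' V_nonneg, tsum_pi_mul hVs hFa V_nonneg hFa',
      tsum_pi_mul hFb hFb hFb' hFb', hVt, hUa, hUb]
    ring
  rw [hsplit] at hmain
  exact hmain

end Stmt12Aux
namespace Stmt12Aux
open Real

lemma good_of_close {S : Set ℂ} {e : ℝ} (he : e^2 < 1/2)
    (h : ∀ z ∈ S, ‖z - 1‖ ≤ e) : GoodPosition S := by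
  have h2 : (0:ℝ) < Real.sqrt 2 := by positivity
  have hs2 : Real.sqrt 2 * Real.sqrt 2 = 2 := Real.mul_self_sqrt (by norm_num)
  set s : ℝ := Real.sqrt 2 / 2 with hsdef
  have hs0 : 0 < s := by positivity
  have hinv : s * s = 1/2 := by rw [hsdef]; nlinarith [hs2]
  set u : ℂ := (s : ℝ) + (s : ℝ) * Complex.I with hu
  have hre : u.re = s := by simp [hu]
  have him : u.im = s := by simp [hu]
  refine ⟨u, ?_, ?_⟩
  · rw [Complex.norm_def, Complex.normSq_apply, hre, him, hinv]
    norm_num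
  · intro z hz
    have hd := h z hz
    have hsq : (z.re - 1)^2 + z.im^2 ≤ e^2 := by
      have h1 : ‖z-1‖^2 ≤ e^2 := by
        nlinarith [norm_nonneg (z-1)]
      rw [Complex.sq_norm, Complex.normSq_apply] at h1
      have h2' : (z.re - 1) * (z.re - 1) + z.im * z.im ≤ e^2 := by simpa using h1
      nlinarith [h2']
    constructor
    · have hcalc : (u * z).re = s * (z.re - z.im) := by
        rw [Complex.mul_re, hre, him]; ring
      rw [hcalc]
      apply mul_pos (by positivity)
      nlinarith [sq_nonneg (z.re - z.im), sq_nonneg (z.re - 1 + z.im)]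
    · have hcalc : (u * z).im = s * (z.re + z.im) := by
        rw [Complex.mul_im, hre, him]; ring
      rw [hcalc]
      apply mul_pos (by positivity)
      nlinarith [sq_nonneg (z.re + z.im), sq_nonneg (z.re - 1 - z.im)]

end Stmt12Aux


/-- If r(τ) ≥ 0.4, or if λ₁(τ) ≥ 0.6, then θ₀(τ), …, θ₃(τ) are in good position. -/
theorem stmt_12 (τ : Mat2) (hτ : inH2 τ) :
    (0.4 ≤ rmin τ → GoodPosition {z : ℂ | ∃ j ≤ 3, z = thetaIdx j τ}) ∧
    (0.6 ≤ lambda1 τ → GoodPosition {z : ℂ | ∃ j ≤ 3, z = thetaIdx j τ}) := by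
  
  have habs : ∀ (al be : ℝ), 0 < be → be ≤ al → al ≤ y1 τ → al ≤ y2 τ → be ≤ lambda1 τ →
      ∀ j ≤ 3, ‖thetaIdx j τ - 1‖ ≤
        4 * (Real.exp (-(Real.pi * al)) / (1 - Real.exp (-(Real.pi * al))^3)) +
        4 * (Real.exp (-(Real.pi * be)) / (1 - Real.exp (-(Real.pi * be))^3))^2 := by
    intro al be h1 h2 h3 h4 h5 j hj
    interval_cases j <;>
      [ (have he : thetaIdx 0 τ = theta ![0,0] ![0,0] τ := by norm_num [thetaIdx]);
        (have he : thetaIdx 1 τ = theta ![0,0] ![1,0] τ := by norm_num [thetaIdx]);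
        (have he : thetaIdx 2 τ = theta ![0,0] ![0,1] τ := by norm_num [thetaIdx]);
        (have he : thetaIdx 3 τ = theta ![0,0] ![1,1] τ := by norm_num [thetaIdx])] <;>
      rw [he] <;>
      exact Stmt12Aux.theta_bound τ hτ h1 h2 h3 h4 h5 _
  constructor
  · intro h
    have hml : rmin τ ≤ lambda1 τ := min_le_left _ _
    have hm1 : rmin τ ≤ y1 τ / 2 := le_trans (min_le_right _ _) (min_le_left _ _)
    have hm2 : rmin τ ≤ y2 τ / 2 := le_trans (min_le_right _ _) (min_le_right _ _)
    have hl : (2/5:ℝ) ≤ lambda1 τ := by norm_num at h ⊢; linarith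
    have hy1' : (4/5:ℝ) ≤ y1 τ := by norm_num at h ⊢; linarith
    have hy2' : (4/5:ℝ) ≤ y2 τ := by norm_num at h ⊢; linarith
    apply Stmt12Aux.good_of_close (e := 0.666) (by norm_num)
    rintro z ⟨j, hj3, rfl⟩
    refine le_trans (habs (4/5) (2/5) (by norm_num) (by norm_num) hy1' hy2' hl j hj3) ?_
    have ha := Stmt12Aux.exp_neg45
    have hb := Stmt12Aux.exp_neg25
    have hA : Real.exp (-(Real.pi * (4/5))) / (1 - Real.exp (-(Real.pi * (4/5)))^3)
        ≤ 0.08109/(1-(0.08109:ℝ)^3) :=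
      Stmt12Aux.ratio_mono (Real.exp_pos _).le ha (by norm_num)
    have hB : Real.exp (-(Real.pi * (2/5))) / (1 - Real.exp (-(Real.pi * (2/5)))^3)
        ≤ 0.28475/(1-(0.28475:ℝ)^3) :=
      Stmt12Aux.ratio_mono (Real.exp_pos _).le hb (by norm_num)
    have hBnn : 0 ≤ Real.exp (-(Real.pi * (2/5))) / (1 - Real.exp (-(Real.pi * (2/5)))^3) := by
      apply div_nonneg (Real.exp_pos _).le
      have h3 : Real.exp (-(Real.pi * (2/5)))^3 ≤ (0.28475:ℝ)^3 :=
        pow_le_pow_left₀ (Real.exp_pos _).le hb 3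
      nlinarith [h3]
    calc 4 * (Real.exp (-(Real.pi * (4/5))) / (1 - Real.exp (-(Real.pi * (4/5)))^3)) +
        4 * (Real.exp (-(Real.pi * (2/5))) / (1 - Real.exp (-(Real.pi * (2/5)))^3))^2
        ≤ 4 * (0.08109/(1-(0.08109:ℝ)^3)) + 4 * (0.28475/(1-(0.28475:ℝ)^3))^2 := by
          gcongr
      _ ≤ 0.666 := by norm_num
  · intro h
    have hl : (3/5:ℝ) ≤ lambda1 τ := by norm_num at h ⊢; linarith
    have hmin := Stmt12Aux.lambda1_le_min τ
    have hy1' : (3/5:ℝ) ≤ y1 τ := le_trans hl (le_trans hmin (min_le_left _ _))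
    have hy2' : (3/5:ℝ) ≤ y2 τ := le_trans hl (le_trans hmin (min_le_right _ _))
    apply Stmt12Aux.good_of_close (e := 0.703) (by norm_num)
    rintro z ⟨j, hj3, rfl⟩
    refine le_trans (habs (3/5) (3/5) (by norm_num) (by norm_num) hy1' hy2' hl j hj3) ?_
    have hc := Stmt12Aux.exp_neg35
    have hC : Real.exp (-(Real.pi * (3/5))) / (1 - Real.exp (-(Real.pi * (3/5)))^3)
        ≤ 0.15195/(1-(0.15195:ℝ)^3) :=
      Stmt12Aux.ratio_mono (Real.exp_pos _).le hc (by norm_num)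
    have hCnn : 0 ≤ Real.exp (-(Real.pi * (3/5))) / (1 - Real.exp (-(Real.pi * (3/5)))^3) := by
      apply div_nonneg (Real.exp_pos _).le
      have h3 : Real.exp (-(Real.pi * (3/5)))^3 ≤ (0.15195:ℝ)^3 :=
        pow_le_pow_left₀ (Real.exp_pos _).le hc 3
      nlinarith [h3]
    calc 4 * (Real.exp (-(Real.pi * (3/5))) / (1 - Real.exp (-(Real.pi * (3/5)))^3)) +
        4 * (Real.exp (-(Real.pi * (3/5))) / (1 - Real.exp (-(Real.pi * (3/5)))^3))^2
        ≤ 4 * (0.15195/(1-(0.15195:ℝ)^3)) + 4 * (0.15195/(1-(0.15195:ℝ)^3))^2 := by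
          gcongr
      _ ≤ 0.703 := by norm_num
end
end

section
/- For every τ ∈ 𝓕′, one has r(γ₁τ) ≥ 9·y₁(τ)/(34·|z₁(τ)|²), r(γ₂τ) ≥ 9·y₂(τ)/(34·|z₂(τ)|²), and λ₁(γ₃τ) ≥ 9/(44·y₂(τ)). -/
open Complex

noncomputable section

set_option linter.unusedVariables false
set_option maxHeartbeats 1600000

-- common facts: p,q,x2 ∈ [-1/2,1/2] squared ≤ 1/4; 4w²≤u²; u≤v; u²≥3/4; u>0; N=p²+u²≥1; M=x2²+v²≥1
section
variable (p q x2 u v w : ℝ)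

lemma aux_uvw (hw2 : 4*w^2 ≤ u^2) (huv : u ≤ v) (hu0 : 0 < u) :
    3*(u*v) ≤ 4*(u*v - w^2) := by nlinarith [mul_le_mul_of_nonneg_left huv hu0.le]

lemma aux_uv34 (huv : u ≤ v) (hu2 : 3/4 ≤ u^2) (hu0 : 0 < u) : 3/4 ≤ u*v := by
  nlinarith [mul_le_mul_of_nonneg_left huv hu0.le]

lemma aux_E (hw2 : 4*w^2 ≤ u^2) (huv : u ≤ v) (hu2 : 3/4 ≤ u^2) (hu0 : 0 < u) :
    9/16 ≤ u*v - w^2 := by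
  have h1 := aux_uvw u v w hw2 huv hu0
  have h2 := aux_uv34 u v huv hu2 hu0
  linarith

lemma aux1a (hq2 : q^2 ≤ 1/4) (hw2 : 4*w^2 ≤ u^2) (huv : u ≤ v) (hu2 : 3/4 ≤ u^2)
    (hu0 : 0 < u) (hN1 : 1 ≤ p^2+u^2) :
    9*u ≤ 17*((p^2+u^2)*v + (q^2-w^2)*u - 2*p*q*w) := by
  have hE := aux_E u v w hw2 huv hu2 hu0
  nlinarith [sq_nonneg (q*u - p*w), mul_nonneg (by linarith : (0:ℝ) ≤ p^2+u^2-1) (by linarith : (0:ℝ) ≤ u*v - w^2), hu0, sq_nonneg u]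

lemma aux1b (hp2 : p^2 ≤ 1/4) (hq2 : q^2 ≤ 1/4) (hw2 : 4*w^2 ≤ u^2) (huv : u ≤ v)
    (hu2 : 3/4 ≤ u^2) (hu0 : 0 < u) (hN1 : 1 ≤ p^2+u^2) :
    9*u*(u + ((p^2+u^2)*v + (q^2-w^2)*u - 2*p*q*w)) ≤ 34*(p^2+u^2)*(u*v - w^2) := by
  have hE := aux_E u v w hw2 huv hu2 hu0
  have hC : u*u ≤ u*v := mul_le_mul_of_nonneg_left huv hu0.le
  nlinarith [sq_nonneg (q*u + p*w),
    mul_nonneg (by linarith : (0:ℝ) ≤ p^2+u^2-1) (by linarith : (0:ℝ) ≤ u*v - w^2),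
    mul_le_mul_of_nonneg_right hq2 (sq_nonneg u),
    mul_le_mul_of_nonneg_right hp2 (sq_nonneg w),
    hw2, hu2, hC]

lemma aux2a (hq2 : q^2 ≤ 1/4) (hx22 : x2^2 ≤ 1/4) (hw2 : 4*w^2 ≤ u^2) (huv : u ≤ v)
    (hu2 : 3/4 ≤ u^2) (hu0 : 0 < u) (hv0 : 0 < v) :
    9*v ≤ 17*((x2^2+v^2)*u + (q^2-w^2)*v - 2*x2*q*w) := by
  have hE := aux_E u v w hw2 huv hu2 hu0
  nlinarith [sq_nonneg (q*v - x2*w), hv0,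
    mul_nonneg (sq_nonneg x2) (by linarith : (0:ℝ) ≤ u*v - w^2),
    mul_nonneg (by linarith : (0:ℝ) ≤ u*v - w^2 - 9/16) (sq_nonneg v)]

lemma aux2b (hq2 : q^2 ≤ 1/4) (hx22 : x2^2 ≤ 1/4) (hw2 : 4*w^2 ≤ u^2) (huv : u ≤ v)
    (hu2 : 3/4 ≤ u^2) (hu0 : 0 < u) (hv0 : 0 < v) (hM1 : 1 ≤ x2^2+v^2) :
    9*v*(v + ((x2^2+v^2)*u + (q^2-w^2)*v - 2*x2*q*w)) ≤ 34*(x2^2+v^2)*(u*v - w^2) := by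
  have hB := aux_uvw u v w hw2 huv hu0
  have hu39 : 39/50 ≤ u := by nlinarith
  nlinarith [sq_nonneg (q*v + x2*w),
    mul_le_mul_of_nonneg_right hq2 (sq_nonneg v),
    mul_le_mul_of_nonneg_right hx22 (sq_nonneg w),
    mul_nonneg (by nlinarith [sq_nonneg x2] : (0:ℝ) ≤ 2*(x2^2+v^2) - 1 - v^2) (by linarith [aux_E u v w hw2 huv hu2 hu0] : (0:ℝ) ≤ u*v - w^2),
    mul_nonneg (by linarith : (0:ℝ) ≤ 4*(u*v-w^2) - 3*(u*v)) (by positivity : (0:ℝ) ≤ 1 + v^2),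
    mul_nonneg (sq_nonneg (v-1)) (mul_pos hu0 hv0).le,
    mul_nonneg (by linarith : (0:ℝ) ≤ u - 39/50) (sq_nonneg v),
    hw2, hu2]
end
section
variable (p q x2 u v w : ℝ)

-- A+B for gamma3, with Dr = p*x2 - u*v - q^2 + w^2, Di = p*v + x2*u - 2*q*w
lemma aux3a (hp2 : p^2 ≤ 1/4) (hq2 : q^2 ≤ 1/4) (hx22 : x2^2 ≤ 1/4) (hw2 : 4*w^2 ≤ u^2)
    (huv : u ≤ v) (hu2 : 3/4 ≤ u^2) (hu0 : 0 < u) :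
    0 < (p*(p*v + x2*u - 2*q*w) - u*(p*x2 - u*v - q^2 + w^2)) +
        (x2*(p*v + x2*u - 2*q*w) - v*(p*x2 - u*v - q^2 + w^2)) := by
  have hE := aux_E u v w hw2 huv hu2 hu0
  have hpx : (p+x2)^2 ≤ 1 := by nlinarith
  nlinarith [sq_nonneg ((u+v)*q - w*(p+x2)),
    mul_le_mul_of_nonneg_left hpx (sq_nonneg w),
    mul_nonneg (by linarith : (0:ℝ) ≤ u*v - w^2 - 9/16) (sq_nonneg (u+v)),
    mul_nonneg (sq_nonneg p) hu0.le, mul_nonneg (sq_nonneg x2) hu0.le,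
    hw2, hu0, huv]

set_option maxHeartbeats 2000000 in
lemma aux3b (hp2 : p^2 ≤ 1/4) (hq2 : q^2 ≤ 1/4) (hx22 : x2^2 ≤ 1/4) (hw2 : 4*w^2 ≤ u^2)
    (huv : u ≤ v) (hu2 : 3/4 ≤ u^2) (hu0 : 0 < u) :
    9*((p*(p*v + x2*u - 2*q*w) - u*(p*x2 - u*v - q^2 + w^2)) +
       (x2*(p*v + x2*u - 2*q*w) - v*(p*x2 - u*v - q^2 + w^2))) ≤ 44*v*(u*v - w^2) := by
  have hX := aux_E u v w hw2 huv hu2 hu0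
  have hB := aux_uvw u v w hw2 huv hu0
  have hv0 : 0 < v := by linarith
  have hC : u*u ≤ u*v := mul_le_mul_of_nonneg_left huv hu0.le
  have hpx : (p+x2)^2 ≤ 1 := by nlinarith
  have hqpx : q^2*(p+x2)^2 ≤ 1/4 := by
    calc q^2*(p+x2)^2 ≤ 1/4*1 := mul_le_mul hq2 hpx (sq_nonneg _) (by norm_num)
    _ = 1/4 := by norm_num
  have t1 : -(18*(q*w*(p+x2))) ≤ 9/4 + 9*w^2 := by
    have h := sq_nonneg (3*(q*(p+x2)) + 3*w)
    nlinarith [h]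
  have t2 : 4*w^2 ≤ u*v := by nlinarith
  have t3 : 9*(p^2*v) ≤ 9/4*v := by nlinarith [mul_le_mul_of_nonneg_right hp2 hv0.le]
  have t4 : 9*(x2^2*u) ≤ 9/4*v := by nlinarith [mul_le_mul_of_nonneg_right hx22 hu0.le]
  have t5 : 9*((u+v)*q^2) ≤ 9/2*v := by
    nlinarith [mul_le_mul_of_nonneg_left hq2 (by linarith : (0:ℝ) ≤ u+v)]
  have t6 : 9*((u+v)*(u*v-w^2)) ≤ 18*(v*(u*v-w^2)) := by
    linarith [mul_nonneg (by linarith : (0:ℝ) ≤ v-u) (by linarith : (0:ℝ) ≤ u*v-w^2)]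
  have t8 : 39/50 ≤ v := by nlinarith [hu2, hu0, huv]
  have t7 : 0 ≤ (u*v - w^2 - 9/16)*(26*v - 3) :=
    mul_nonneg (by linarith) (by linarith)
  have t2' : 9*w^2 ≤ 9/4*(u*v) := by linarith
  linarith [t1, t2', t3, t4, t5, t6, t7, t8, hB, hX]
end

section
variable (p q r u v w : ℝ)

lemma lam_ge {a b c m : ℝ} (hT : 0 < a + b) (hm : 0 ≤ m) (h : m * (a+b) ≤ a*b - c^2) :
    m ≤ (a + b - Real.sqrt ((a-b)^2 + 4*c^2)) / 2 := by
  have h2m : 2*m ≤ a + b := by nlinarith [sq_nonneg (a-b), sq_nonneg c]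
  have hs : Real.sqrt ((a-b)^2+4*c^2) ≤ a + b - 2*m := by
    rw [show a+b-2*m = Real.sqrt ((a+b-2*m)^2) from (Real.sqrt_sq (by linarith)).symm]
    apply Real.sqrt_le_sqrt; nlinarith
  linarith

set_option maxHeartbeats 1000000 in
lemma part1final (hp2 : p^2 ≤ 1/4) (hq2 : q^2 ≤ 1/4) (hw2 : 4*w^2 ≤ u^2) (huv : u ≤ v)
    (hu2 : 3/4 ≤ u^2) (hu0 : 0 < u) (hN1 : 1 ≤ p^2+u^2) :
    9*u/(34*(p^2+u^2)) ≤
      min ((u/(p^2+u^2) + ((p^2+u^2)*v + (q^2-w^2)*u - 2*p*q*w)/(p^2+u^2) -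
        Real.sqrt ((u/(p^2+u^2) - ((p^2+u^2)*v + (q^2-w^2)*u - 2*p*q*w)/(p^2+u^2))^2 +
          4*((q*u - p*w)/(p^2+u^2))^2))/2)
      (min (u/(p^2+u^2)/2) (((p^2+u^2)*v + (q^2-w^2)*u - 2*p*q*w)/(p^2+u^2)/2)) := by
  have hN0 : (0:ℝ) < p^2+u^2 := by nlinarith
  have h1a := aux1a p q u v w hq2 hw2 huv hu2 hu0 hN1
  have h1b := aux1b p q u v w hp2 hq2 hw2 huv hu2 hu0 hN1
  set N := p^2+u^2 with hN
  set B := N*v + (q^2-w^2)*u - 2*p*q*w with hB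
  refine le_min ?_ (le_min ?_ ?_)
  · apply lam_ge
    · rw [← add_div]
      exact div_pos (by linarith) hN0
    · positivity
    · have key : u/N * (B/N) - ((q*u - p*w)/N)^2 - 9*u/(34*N) * (u/N + B/N)
          = (34*N*(u*v - w^2) - 9*u*(u + B)) / (34*N^2) := by
        rw [hB, hN]; field_simp; ring
      have h2 : (0:ℝ) ≤ (34*N*(u*v - w^2) - 9*u*(u + B)) / (34*N^2) :=
        div_nonneg (by linarith) (by positivity)
      linarith
  · have : u/N/2 - 9*u/(34*N) = 8*u/(34*N) := by field_simp; ring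
    have h2 : (0:ℝ) ≤ 8*u/(34*N) := by positivity
    linarith
  · have : B/N/2 - 9*u/(34*N) = (17*B - 9*u)/(34*N) := by field_simp; ring
    have h2 : (0:ℝ) ≤ (17*B - 9*u)/(34*N) := div_nonneg (by linarith) (by positivity)
    linarith

set_option maxHeartbeats 1000000 in
lemma part2final (hq2 : q^2 ≤ 1/4) (hr2 : r^2 ≤ 1/4) (hw2 : 4*w^2 ≤ u^2) (huv : u ≤ v)
    (hu2 : 3/4 ≤ u^2) (hu0 : 0 < u) (hM1 : 1 ≤ r^2+v^2) :
    9*v/(34*(r^2+v^2)) ≤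
      min ((((r^2+v^2)*u + (q^2-w^2)*v - 2*r*q*w)/(r^2+v^2) + v/(r^2+v^2) -
        Real.sqrt ((((r^2+v^2)*u + (q^2-w^2)*v - 2*r*q*w)/(r^2+v^2) - v/(r^2+v^2))^2 +
          4*((q*v - r*w)/(r^2+v^2))^2))/2)
      (min (((r^2+v^2)*u + (q^2-w^2)*v - 2*r*q*w)/(r^2+v^2)/2) (v/(r^2+v^2)/2)) := by
  have hv0 : (0:ℝ) < v := by linarith
  have hM0 : (0:ℝ) < r^2+v^2 := by nlinarith
  have h2a := aux2a q r u v w hq2 hr2 hw2 huv hu2 hu0 hv0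
  have h2b := aux2b q r u v w hq2 hr2 hw2 huv hu2 hu0 hv0 hM1
  set M := r^2+v^2 with hM
  set A := M*u + (q^2-w^2)*v - 2*r*q*w with hA
  refine le_min ?_ (le_min ?_ ?_)
  · apply lam_ge
    · rw [← add_div]
      exact div_pos (by linarith) hM0
    · positivity
    · have key : A/M * (v/M) - ((q*v - r*w)/M)^2 - 9*v/(34*M) * (A/M + v/M)
          = (34*M*(u*v - w^2) - 9*v*(v + A)) / (34*M^2) := by
        rw [hA, hM]; field_simp; ring
      have h2 : (0:ℝ) ≤ (34*M*(u*v - w^2) - 9*v*(v + A)) / (34*M^2) :=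
        div_nonneg (by linarith) (by positivity)
      linarith
  · have : A/M/2 - 9*v/(34*M) = (17*A - 9*v)/(34*M) := by field_simp; ring
    have h2 : (0:ℝ) ≤ (17*A - 9*v)/(34*M) := div_nonneg (by linarith) (by positivity)
    linarith
  · have : v/M/2 - 9*v/(34*M) = 8*v/(34*M) := by field_simp; ring
    have h2 : (0:ℝ) ≤ 8*v/(34*M) := by positivity
    linarith

set_option maxHeartbeats 1600000 in
lemma part3final (hp2 : p^2 ≤ 1/4) (hq2 : q^2 ≤ 1/4) (hr2 : r^2 ≤ 1/4) (hw2 : 4*w^2 ≤ u^2)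
    (huv : u ≤ v) (hu2 : 3/4 ≤ u^2) (hu0 : 0 < u) :
    9/(44*v) ≤
      ((p*(p*v + r*u - 2*q*w) - u*(p*r - u*v - q^2 + w^2))/((p*r - u*v - q^2 + w^2)^2 + (p*v + r*u - 2*q*w)^2) +
       (r*(p*v + r*u - 2*q*w) - v*(p*r - u*v - q^2 + w^2))/((p*r - u*v - q^2 + w^2)^2 + (p*v + r*u - 2*q*w)^2) -
        Real.sqrt (((p*(p*v + r*u - 2*q*w) - u*(p*r - u*v - q^2 + w^2))/((p*r - u*v - q^2 + w^2)^2 + (p*v + r*u - 2*q*w)^2) -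
          (r*(p*v + r*u - 2*q*w) - v*(p*r - u*v - q^2 + w^2))/((p*r - u*v - q^2 + w^2)^2 + (p*v + r*u - 2*q*w)^2))^2 +
          4*((w*(p*r - u*v - q^2 + w^2) - q*(p*v + r*u - 2*q*w))/((p*r - u*v - q^2 + w^2)^2 + (p*v + r*u - 2*q*w)^2))^2))/2 := by
  have hv0 : (0:ℝ) < v := by linarith
  have h3a := aux3a p q r u v w hp2 hq2 hr2 hw2 huv hu2 hu0
  have h3b := aux3b p q r u v w hp2 hq2 hr2 hw2 huv hu2 hu0
  set Dr := p*r - u*v - q^2 + w^2 with hDr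
  set Di := p*v + r*u - 2*q*w with hDi
  have hK0 : (0:ℝ) < Dr^2 + Di^2 := by
    rcases lt_or_eq_of_le (sq_nonneg Dr) with h | h
    · positivity
    · rcases lt_or_eq_of_le (sq_nonneg Di) with h' | h'
      · positivity
      · exfalso
        have eDr : Dr = 0 := by nlinarith [sq_nonneg Dr]
        have eDi : Di = 0 := by nlinarith [sq_nonneg Di]
        rw [eDr, eDi] at h3a
        norm_num at h3a
  set K := Dr^2 + Di^2 with hK
  have hrel : p*r - q^2 - Dr = u*v - w^2 := by rw [hDr]; ring
  have hrel2 : p*v + r*u - 2*q*w = Di := hDi.symm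
  have hdet : (p*Di - u*Dr)*(r*Di - v*Dr) - (w*Dr - q*Di)^2 = K*(u*v - w^2) := by
    rw [hK]; linear_combination (Di^2) * hrel + (Dr*Di) * hrel2
  apply lam_ge
  · rw [← add_div]
    exact div_pos (by linarith) hK0
  · positivity
  · have hab : (p*Di - u*Dr)/K * ((r*Di - v*Dr)/K) - ((w*Dr - q*Di)/K)^2
        = (u*v - w^2)/K := by
      field_simp
      linear_combination K * hdet
    rw [← add_div, hab, div_mul_div_comm, div_le_div_iff₀ (by positivity) hK0]
    nlinarith [mul_nonneg (sub_nonneg.mpr h3b) hK0.le]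
end


lemma gamma1_eq (τ : Mat2) (hs : τ.IsSymm) (h1 : τ 0 0 ≠ 0) :
    gammaAction 1 τ = !![-1 - 1/(τ 0 0), -(τ 0 1)/(τ 0 0);
      -(τ 0 1)/(τ 0 0), τ 1 1 - (τ 0 1)^2/(τ 0 0)] := by
  have h10 : τ 1 0 = τ 0 1 := hs.apply 0 1
  have hτ : τ = !![τ 0 0, τ 0 1; τ 0 1, τ 1 1] := by
    have h := Matrix.eta_fin_two τ; rwa [h10] at h
  set a := τ 0 0; set b := τ 0 1; set d := τ 1 1
  have hM : Smat 1 * τ + (-1 + Smat 1 ^ 2) = !![a, b; 0, -1] := by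
    rw [hτ]; ext i j; fin_cases i <;> fin_cases j <;>
      simp [Smat, pow_two, Matrix.mul_apply, Fin.sum_univ_two, Matrix.one_apply]
  have hinv : (!![a, b; (0:ℂ), -1])⁻¹ = !![1/a, b/a; 0, -1] := by
    apply Matrix.inv_eq_right_inv
    ext i j; fin_cases i <;> fin_cases j <;>
      simp [Matrix.mul_apply, Fin.sum_univ_two, Matrix.one_apply] <;>
      field_simp <;> ring
  rw [gammaAction]
  simp only [if_neg (by norm_num : (1:ℕ) ≠ 0)]
  rw [actBlocks, hM, hinv]
  rw [show (-1 : Mat2) * τ + -(Smat 1) = !![-a - 1, -b; -b, -d] by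
    rw [hτ]; ext i j; fin_cases i <;> fin_cases j <;>
      simp [Smat, Matrix.mul_apply, Fin.sum_univ_two] <;> ring]
  ext i j; fin_cases i <;> fin_cases j <;>
    simp [Matrix.mul_apply, Fin.sum_univ_two] <;> field_simp <;> ring


lemma gamma2_eq (τ : Mat2) (hs : τ.IsSymm) (h2 : τ 1 1 ≠ 0) :
    gammaAction 2 τ = !![τ 0 0 - (τ 0 1)^2/(τ 1 1), -(τ 0 1)/(τ 1 1);
      -(τ 0 1)/(τ 1 1), -1 - 1/(τ 1 1)] := by
  have h10 : τ 1 0 = τ 0 1 := hs.apply 0 1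
  have hτ : τ = !![τ 0 0, τ 0 1; τ 0 1, τ 1 1] := by
    have h := Matrix.eta_fin_two τ; rwa [h10] at h
  set a := τ 0 0; set b := τ 0 1; set d := τ 1 1
  have hM : Smat 2 * τ + (-1 + Smat 2 ^ 2) = !![-1, 0; b, d] := by
    rw [hτ]; ext i j; fin_cases i <;> fin_cases j <;>
      simp [Smat, pow_two, Matrix.mul_apply, Fin.sum_univ_two, Matrix.one_apply]
  have hinv : (!![(-1:ℂ), 0; b, d])⁻¹ = !![-1, 0; b/d, 1/d] := by
    apply Matrix.inv_eq_right_inv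
    ext i j; fin_cases i <;> fin_cases j <;>
      simp [Matrix.mul_apply, Fin.sum_univ_two, Matrix.one_apply] <;>
      field_simp <;> ring
  rw [gammaAction]
  simp only [if_neg (by norm_num : (2:ℕ) ≠ 0)]
  rw [actBlocks, hM, hinv]
  rw [show (-1 : Mat2) * τ + -(Smat 2) = !![-a, -b; -b, -d - 1] by
    rw [hτ]; ext i j; fin_cases i <;> fin_cases j <;>
      simp [Smat, Matrix.mul_apply, Fin.sum_univ_two] <;> ring]
  ext i j; fin_cases i <;> fin_cases j <;>
    simp [Matrix.mul_apply, Fin.sum_univ_two] <;> field_simp <;> ring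

lemma gamma3_eq (τ : Mat2) (hs : τ.IsSymm) (hD : τ 0 0 * τ 1 1 - (τ 0 1)^2 ≠ 0) :
    gammaAction 3 τ = !![-(τ 0 0)/(τ 0 0 * τ 1 1 - (τ 0 1)^2), τ 0 1/(τ 0 0 * τ 1 1 - (τ 0 1)^2) - 1;
      τ 0 1/(τ 0 0 * τ 1 1 - (τ 0 1)^2) - 1, -(τ 1 1)/(τ 0 0 * τ 1 1 - (τ 0 1)^2)] := by
  have h10 : τ 1 0 = τ 0 1 := hs.apply 0 1
  have hτ : τ = !![τ 0 0, τ 0 1; τ 0 1, τ 1 1] := by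
    have h := Matrix.eta_fin_two τ; rwa [h10] at h
  set a := τ 0 0; set b := τ 0 1; set d := τ 1 1
  set D := a * d - b^2 with hDdef
  have hM : Smat 3 * τ + (-1 + Smat 3 ^ 2) = !![b, d; a, b] := by
    rw [hτ]; ext i j; fin_cases i <;> fin_cases j <;>
      simp [Smat, pow_two, Matrix.mul_apply, Fin.sum_univ_two, Matrix.one_apply]
  have hinv : (!![b, d; a, b])⁻¹ = !![-b/D, d/D; a/D, -b/D] := by
    apply Matrix.inv_eq_right_inv
    ext i j; fin_cases i <;> fin_cases j <;>
      simp [Matrix.mul_apply, Fin.sum_univ_two, Matrix.one_apply] <;>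
      field_simp <;> ring
  rw [gammaAction]
  simp only [if_neg (by norm_num : (3:ℕ) ≠ 0)]
  rw [actBlocks, hM, hinv]
  rw [show (-1 : Mat2) * τ + -(Smat 3) = !![-a, -b - 1; -b - 1, -d] by
    rw [hτ]; ext i j; fin_cases i <;> fin_cases j <;>
      simp [Smat, Matrix.mul_apply, Fin.sum_univ_two] <;> ring]
  ext i j; fin_cases i <;> fin_cases j <;>
    simp [Matrix.mul_apply, Fin.sum_univ_two] <;> field_simp <;> ring


set_option maxHeartbeats 4000000 in
theorem stmt_13' (τ : Mat2) (hτ : inF' τ) :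
    9 * y1 τ / (34 * ‖z1 τ‖ ^ 2) ≤ rmin (gammaAction 1 τ) ∧
    9 * y2 τ / (34 * ‖z2 τ‖ ^ 2) ≤ rmin (gammaAction 2 τ) ∧
    9 / (44 * y2 τ) ≤ lambda1 (gammaAction 3 τ) := by
  obtain ⟨⟨hsym, hpos⟩, hx1, hx2, hx3, hy3, hy12, hy1, hz1a, hz2a⟩ := hτ
  simp only [x1, x2, x3, y1, y2, y3, z1, z2, z3] at hx1 hx2 hx3 hy3 hy12 hy1 hz1a hz2a
  -- real coordinate facts
  have hp2 : ((τ 0 0).re)^2 ≤ 1/4 := by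
    have h := abs_le.mp hx1; nlinarith [h.1, h.2]
  have hr2 : ((τ 1 1).re)^2 ≤ 1/4 := by
    have h := abs_le.mp hx2; nlinarith [h.1, h.2]
  have hq2 : ((τ 0 1).re)^2 ≤ 1/4 := by
    have h := abs_le.mp hx3; nlinarith [h.1, h.2]
  have hs3 : (0:ℝ) < Real.sqrt 3 := Real.sqrt_pos.mpr (by norm_num)
  have hu0 : (0:ℝ) < (τ 0 0).im := by nlinarith [hy1]
  have hu2 : (3:ℝ)/4 ≤ ((τ 0 0).im)^2 := by
    nlinarith [Real.sq_sqrt (show (0:ℝ) ≤ 3 by norm_num), hy1]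
  have hw2 : 4*((τ 0 1).im)^2 ≤ ((τ 0 0).im)^2 := by
    have h := abs_le.mp (show |(τ 0 1).im| ≤ (τ 0 0).im/2 by linarith [hy3])
    nlinarith [h.1, h.2]
  have hN1 : 1 ≤ ((τ 0 0).re)^2 + ((τ 0 0).im)^2 := by
    have h : (1:ℝ) ≤ ‖τ 0 0‖^2 := by nlinarith [hz1a]
    rw [Complex.sq_norm, Complex.normSq_apply] at h; nlinarith [h]
  have hM1 : 1 ≤ ((τ 1 1).re)^2 + ((τ 1 1).im)^2 := by
    have h : (1:ℝ) ≤ ‖τ 1 1‖^2 := by nlinarith [hz2a]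
    rw [Complex.sq_norm, Complex.normSq_apply] at h; nlinarith [h]
  have hz1ne : τ 0 0 ≠ 0 := by
    intro h; rw [h] at hz1a; norm_num at hz1a
  have hz2ne : τ 1 1 ≠ 0 := by
    intro h; rw [h] at hz2a; norm_num at hz2a
  -- D = z1 z2 - z3^2
  have hDre : (τ 0 0 * τ 1 1 - τ 0 1^2).re
      = (τ 0 0).re*(τ 1 1).re - (τ 0 0).im*(τ 1 1).im - ((τ 0 1).re^2 - (τ 0 1).im^2) := by
    simp [Complex.mul_re, pow_two]; try ring
  have hDim : (τ 0 0 * τ 1 1 - τ 0 1^2).im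
      = (τ 0 0).re*(τ 1 1).im + (τ 0 0).im*(τ 1 1).re - 2*(τ 0 1).re*(τ 0 1).im := by
    simp [Complex.mul_im, pow_two]; try ring
  have h3a := aux3a ((τ 0 0).re) ((τ 0 1).re) ((τ 1 1).re) ((τ 0 0).im) ((τ 1 1).im)
    ((τ 0 1).im) hp2 hq2 hr2 hw2 hy12 hu2 hu0
  have hDne : τ 0 0 * τ 1 1 - (τ 0 1)^2 ≠ 0 := by
    intro h
    have h1 : (τ 0 0 * τ 1 1 - τ 0 1^2).re = 0 := by rw [h]; rfl
    have h2 : (τ 0 0 * τ 1 1 - τ 0 1^2).im = 0 := by rw [h]; rfl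
    rw [hDre] at h1; rw [hDim] at h2
    have c3 : ((τ 0 0).im + (τ 1 1).im) *
        ((τ 0 0).re*(τ 1 1).re - (τ 0 0).im*(τ 1 1).im - ((τ 0 1).re^2 - (τ 0 1).im^2)) = 0 := by
      rw [h1, mul_zero]
    have c4 : ((τ 0 0).re + (τ 1 1).re) *
        ((τ 0 0).re*(τ 1 1).im + (τ 0 0).im*(τ 1 1).re - 2*(τ 0 1).re*(τ 0 1).im) = 0 := by
      rw [h2, mul_zero]
    nlinarith [h3a, c3, c4]
  have hKpos : 0 < ((τ 0 0).re*(τ 1 1).re - (τ 0 0).im*(τ 1 1).im - (((τ 0 1).re)^2 - ((τ 0 1).im)^2))^2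
      + ((τ 0 0).re*(τ 1 1).im + (τ 0 0).im*(τ 1 1).re - 2*(τ 0 1).re*(τ 0 1).im)^2 := by
    have h := Complex.normSq_pos.mpr hDne
    rw [Complex.normSq_apply, hDre, hDim] at h
    nlinarith [h]
  -- matrix forms
  have hg1 := gamma1_eq τ hsym hz1ne
  have hg2 := gamma2_eq τ hsym hz2ne
  have hg3 := gamma3_eq τ hsym hDne
  have hN0 : (0:ℝ) < ((τ 0 0).re)^2 + ((τ 0 0).im)^2 := by linarith
  have hM0 : (0:ℝ) < ((τ 1 1).re)^2 + ((τ 1 1).im)^2 := by linarith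
  have hNne : Complex.normSq (τ 0 0) ≠ 0 := by
    rw [Complex.normSq_apply]; nlinarith [hN0]
  have hMne : Complex.normSq (τ 1 1) ≠ 0 := by
    rw [Complex.normSq_apply]; nlinarith [hM0]
  have hNne2 : (τ 0 0).re*(τ 0 0).re + (τ 0 0).im*(τ 0 0).im ≠ 0 := by nlinarith [hN0]
  have hMne2 : (τ 1 1).re*(τ 1 1).re + (τ 1 1).im*(τ 1 1).im ≠ 0 := by nlinarith [hM0]
  have hKne2 : ((τ 0 0).re*(τ 1 1).re - (τ 0 0).im*(τ 1 1).im - ((τ 0 1).re^2 - (τ 0 1).im^2)) *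
        ((τ 0 0).re*(τ 1 1).re - (τ 0 0).im*(τ 1 1).im - ((τ 0 1).re^2 - (τ 0 1).im^2)) +
      ((τ 0 0).re*(τ 1 1).im + (τ 0 0).im*(τ 1 1).re - 2*(τ 0 1).re*(τ 0 1).im) *
        ((τ 0 0).re*(τ 1 1).im + (τ 0 0).im*(τ 1 1).re - 2*(τ 0 1).re*(τ 0 1).im) ≠ 0 := by
    nlinarith [hKpos]
  have hKne3 : ((τ 0 0).re*(τ 1 1).re - (τ 0 0).im*(τ 1 1).im - ((τ 0 1).re)^2 + ((τ 0 1).im)^2)^2 +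
      ((τ 0 0).re*(τ 1 1).im + (τ 1 1).re*(τ 0 0).im - 2*(τ 0 1).re*(τ 0 1).im)^2 ≠ 0 := by
    nlinarith [hKpos]
  -- entry imaginary parts, part 1
  have e100 : ((-1 - 1/(τ 0 0) : ℂ)).im = (τ 0 0).im / (((τ 0 0).re)^2 + ((τ 0 0).im)^2) := by
    rw [Complex.sub_im, one_div, Complex.inv_im, Complex.normSq_apply]
    norm_num
    field_simp [hNne2]
    try ring
    try tauto
  have e101 : ((-(τ 0 1)/(τ 0 0) : ℂ)).im
      = ((τ 0 1).re*(τ 0 0).im - (τ 0 0).re*(τ 0 1).im) / (((τ 0 0).re)^2 + ((τ 0 0).im)^2) := by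
    rw [Complex.div_im, Complex.normSq_apply, Complex.neg_im, Complex.neg_re]
    field_simp [hNne2]; try ring
  have e111 : ((τ 1 1 - (τ 0 1)^2/(τ 0 0) : ℂ)).im
      = ((((τ 0 0).re)^2 + ((τ 0 0).im)^2)*(τ 1 1).im
          + (((τ 0 1).re)^2 - ((τ 0 1).im)^2)*(τ 0 0).im
          - 2*(τ 0 0).re*(τ 0 1).re*(τ 0 1).im) / (((τ 0 0).re)^2 + ((τ 0 0).im)^2) := by
    rw [Complex.sub_im, pow_two, Complex.div_im, Complex.mul_im, Complex.mul_re,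
      Complex.normSq_apply]
    field_simp [hNne2]; try ring
  -- entry imaginary parts, part 2
  have e200 : ((τ 0 0 - (τ 0 1)^2/(τ 1 1) : ℂ)).im
      = ((((τ 1 1).re)^2 + ((τ 1 1).im)^2)*(τ 0 0).im
          + (((τ 0 1).re)^2 - ((τ 0 1).im)^2)*(τ 1 1).im
          - 2*(τ 1 1).re*(τ 0 1).re*(τ 0 1).im) / (((τ 1 1).re)^2 + ((τ 1 1).im)^2) := by
    rw [Complex.sub_im, pow_two, Complex.div_im, Complex.mul_im, Complex.mul_re,
      Complex.normSq_apply]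
    field_simp [hMne2]; try ring
  have e201 : ((-(τ 0 1)/(τ 1 1) : ℂ)).im
      = ((τ 0 1).re*(τ 1 1).im - (τ 1 1).re*(τ 0 1).im) / (((τ 1 1).re)^2 + ((τ 1 1).im)^2) := by
    rw [Complex.div_im, Complex.normSq_apply, Complex.neg_im, Complex.neg_re]
    field_simp [hMne2]; try ring
  have e211 : ((-1 - 1/(τ 1 1) : ℂ)).im = (τ 1 1).im / (((τ 1 1).re)^2 + ((τ 1 1).im)^2) := by
    rw [Complex.sub_im, one_div, Complex.inv_im, Complex.normSq_apply]
    norm_num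
    field_simp [hMne2]
    try ring
    try tauto
  -- entry imaginary parts, part 3
  have hKne : Complex.normSq (τ 0 0 * τ 1 1 - τ 0 1^2) ≠ 0 := Complex.normSq_pos.mpr hDne |>.ne'
  have e300 : ((-(τ 0 0)/(τ 0 0 * τ 1 1 - τ 0 1^2) : ℂ)).im
      = ((τ 0 0).re*((τ 0 0).re*(τ 1 1).im + (τ 1 1).re*(τ 0 0).im - 2*(τ 0 1).re*(τ 0 1).im)
          - (τ 0 0).im*((τ 0 0).re*(τ 1 1).re - (τ 0 0).im*(τ 1 1).im - ((τ 0 1).re)^2 + ((τ 0 1).im)^2))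
        / (((τ 0 0).re*(τ 1 1).re - (τ 0 0).im*(τ 1 1).im - ((τ 0 1).re)^2 + ((τ 0 1).im)^2)^2
          + ((τ 0 0).re*(τ 1 1).im + (τ 1 1).re*(τ 0 0).im - 2*(τ 0 1).re*(τ 0 1).im)^2) := by
    rw [Complex.div_im, Complex.neg_im, Complex.neg_re, Complex.normSq_apply, hDre, hDim,
      div_sub_div_same, div_eq_div_iff hKne2 hKne3]
    ring
  have e311 : ((-(τ 1 1)/(τ 0 0 * τ 1 1 - τ 0 1^2) : ℂ)).im
      = ((τ 1 1).re*((τ 0 0).re*(τ 1 1).im + (τ 1 1).re*(τ 0 0).im - 2*(τ 0 1).re*(τ 0 1).im)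
          - (τ 1 1).im*((τ 0 0).re*(τ 1 1).re - (τ 0 0).im*(τ 1 1).im - ((τ 0 1).re)^2 + ((τ 0 1).im)^2))
        / (((τ 0 0).re*(τ 1 1).re - (τ 0 0).im*(τ 1 1).im - ((τ 0 1).re)^2 + ((τ 0 1).im)^2)^2
          + ((τ 0 0).re*(τ 1 1).im + (τ 1 1).re*(τ 0 0).im - 2*(τ 0 1).re*(τ 0 1).im)^2) := by
    rw [Complex.div_im, Complex.neg_im, Complex.neg_re, Complex.normSq_apply, hDre, hDim,
      div_sub_div_same, div_eq_div_iff hKne2 hKne3]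
    ring
  have e301 : ((τ 0 1/(τ 0 0 * τ 1 1 - τ 0 1^2) - 1 : ℂ)).im
      = ((τ 0 1).im*((τ 0 0).re*(τ 1 1).re - (τ 0 0).im*(τ 1 1).im - ((τ 0 1).re)^2 + ((τ 0 1).im)^2)
          - (τ 0 1).re*((τ 0 0).re*(τ 1 1).im + (τ 1 1).re*(τ 0 0).im - 2*(τ 0 1).re*(τ 0 1).im))
        / (((τ 0 0).re*(τ 1 1).re - (τ 0 0).im*(τ 1 1).im - ((τ 0 1).re)^2 + ((τ 0 1).im)^2)^2
          + ((τ 0 0).re*(τ 1 1).im + (τ 1 1).re*(τ 0 0).im - 2*(τ 0 1).re*(τ 0 1).im)^2) := by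
    rw [Complex.sub_im, Complex.div_im, Complex.normSq_apply, hDre, hDim, div_sub_div_same,
      Complex.one_im, sub_zero, div_eq_div_iff hKne2 hKne3]
    ring
  have habs1 : ‖τ 0 0‖^2 = ((τ 0 0).re)^2 + ((τ 0 0).im)^2 := by
    rw [Complex.sq_norm, Complex.normSq_apply]; ring
  have habs2 : ‖τ 1 1‖^2 = ((τ 1 1).re)^2 + ((τ 1 1).im)^2 := by
    rw [Complex.sq_norm, Complex.normSq_apply]; ring
  refine ⟨?_, ?_, ?_⟩
  · simp only [rmin, lambda1, y1, y2, y3, z1, z2, z3, habs1]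
    rw [hg1]
    simp only [Matrix.of_apply, Matrix.cons_val', Matrix.cons_val_zero, Matrix.cons_val_one,
      Matrix.head_cons, Matrix.empty_val', Matrix.cons_val_fin_one, Matrix.head_fin_const]
    rw [e100, e101, e111]
    have := part1final ((τ 0 0).re) ((τ 0 1).re) ((τ 0 0).im) ((τ 1 1).im) ((τ 0 1).im)
      hp2 hq2 hw2 hy12 hu2 hu0 hN1
    convert this using 6 <;> ring
  · simp only [rmin, lambda1, y1, y2, y3, z1, z2, z3, habs2]
    rw [hg2]
    simp only [Matrix.of_apply, Matrix.cons_val', Matrix.cons_val_zero, Matrix.cons_val_one,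
      Matrix.head_cons, Matrix.empty_val', Matrix.cons_val_fin_one, Matrix.head_fin_const]
    rw [e200, e201, e211]
    have := part2final ((τ 0 1).re) ((τ 1 1).re) ((τ 0 0).im) ((τ 1 1).im) ((τ 0 1).im)
      hq2 hr2 hw2 hy12 hu2 hu0 hM1
    convert this using 6 <;> ring
  · simp only [lambda1, y1, y2, y3, z1, z2, z3]
    rw [hg3]
    simp only [Matrix.of_apply, Matrix.cons_val', Matrix.cons_val_zero, Matrix.cons_val_one,
      Matrix.head_cons, Matrix.empty_val', Matrix.cons_val_fin_one, Matrix.head_fin_const]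
    rw [e300, e301, e311]
    have := part3final ((τ 0 0).re) ((τ 0 1).re) ((τ 1 1).re) ((τ 0 0).im) ((τ 1 1).im)
      ((τ 0 1).im) hp2 hq2 hr2 hw2 hy12 hu2 hu0
    convert this using 6 <;> ring


/-- Lower bounds on r(γ₁τ), r(γ₂τ) and λ₁(γ₃τ) for τ ∈ 𝓕′. -/
theorem stmt_13 (τ : Mat2) (hτ : inF' τ) :
    9 * y1 τ / (34 * ‖z1 τ‖ ^ 2) ≤ rmin (gammaAction 1 τ) ∧
    9 * y2 τ / (34 * ‖z2 τ‖ ^ 2) ≤ rmin (gammaAction 2 τ) ∧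
    9 / (44 * y2 τ) ≤ lambda1 (gammaAction 3 τ) := stmt_13' τ hτ
end
end
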